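/- There exists a universal constant C < infinity such that the following holds. Let J <= K be positive integers, let S and S-hat be real J x K matrices with ||S|| <= 1 and with smallest (J-th) singular value sigma of S satisfying sigma > 0, and let A be a real symmetric positive semidefinite K x K matrix with ||A - I_K|| <= 1/2 and sqrt(2) ||S-hat - S|| + (1 + 2^{-1/2})^{-1} ||A - I_K|| <= sigma / 2. Then || ( S-hat A^{-1} S-hat' )^{-1} S-hat A^{-1} - ( S S' )^{-1} S || <= C * ( sigma^{-1} ||A - I_K|| + sigma^{-2} ( ||S-hat - S|| + ||A - I_K|| ) ). -/

import Mathlib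

noncomputable section
open Matrix

/-- Euclidean norm on ℝ^K. -/
def eucNorm {K : ℕ} (v : Fin K → ℝ) : ℝ := Real.sqrt (∑ k, v k ^ 2)

/-- Spectral norm (largest singular value) of a real matrix. -/
def specNorm {m n : ℕ} (A : Matrix (Fin m) (Fin n) ℝ) : ℝ :=
  sSup {r | ∃ v : Fin n → ℝ, eucNorm v ≤ 1 ∧ r = eucNorm (A.mulVec v)}

/-- Smallest (J-th) singular value of a `J × K` matrix (`J ≤ K`):
`inf { ‖Sᵀ v‖ : v ∈ ℝ^J, ‖v‖ = 1 }`. -/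
def minSingVal {J K : ℕ} (S : Matrix (Fin J) (Fin K) ℝ) : ℝ :=
  sInf {r | ∃ v : Fin J → ℝ, eucNorm v = 1 ∧ r = eucNorm (Sᵀ.mulVec v)}

namespace Stmt13Aux

open scoped Matrix.Norms.L2Operator

variable {m n l : ℕ}

lemma eucNorm_eq (v : Fin n → ℝ) : eucNorm v = ‖(WithLp.equiv 2 (Fin n → ℝ)).symm v‖ := by
  rw [EuclideanSpace.norm_eq]
  simp [eucNorm, sq_abs]

lemma specNorm_eq (A : Matrix (Fin m) (Fin n) ℝ) : specNorm A = ‖A‖ := by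
  set f := (Matrix.toEuclideanLin (𝕜 := ℝ) (m := Fin m) (n := Fin n)).trans
      LinearMap.toContinuousLinearMap A with hf
  have hset : {r | ∃ v : Fin n → ℝ, eucNorm v ≤ 1 ∧ r = eucNorm (A.mulVec v)}
      = (fun x => ‖f x‖) '' Metric.closedBall 0 1 := by
    ext r
    constructor
    · rintro ⟨v, hv, rfl⟩
      refine ⟨(WithLp.equiv 2 (Fin n → ℝ)).symm v, ?_, ?_⟩
      · rw [Metric.mem_closedBall, dist_zero_right]; rw [eucNorm_eq] at hv; exact hv
      · simp only [hf, LinearEquiv.trans_apply, LinearMap.coe_toContinuousLinearMap']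
        rw [eucNorm_eq]; rfl
    · rintro ⟨x, hx, rfl⟩
      refine ⟨WithLp.equiv 2 (Fin n → ℝ) x, ?_, ?_⟩
      · rw [eucNorm_eq]; simpa [dist_zero_right] using hx
      · simp only [hf, LinearEquiv.trans_apply, LinearMap.coe_toContinuousLinearMap']
        rw [eucNorm_eq]; rfl
  rw [specNorm, hset, ContinuousLinearMap.sSup_unitClosedBall_eq_norm, Matrix.l2_opNorm_def]

lemma conjT (A : Matrix (Fin m) (Fin n) ℝ) : Aᴴ = Aᵀ :=
  Matrix.conjTranspose_eq_transpose_of_trivial A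

lemma specNorm_nonneg (A : Matrix (Fin m) (Fin n) ℝ) : 0 ≤ specNorm A := by
  rw [specNorm_eq]; exact norm_nonneg _

lemma specNorm_transpose (A : Matrix (Fin m) (Fin n) ℝ) : specNorm Aᵀ = specNorm A := by
  rw [specNorm_eq, specNorm_eq, ← conjT, Matrix.l2_opNorm_conjTranspose]

lemma specNorm_mul_le (A : Matrix (Fin m) (Fin n) ℝ) (B : Matrix (Fin n) (Fin l) ℝ) :
    specNorm (A * B) ≤ specNorm A * specNorm B := by
  rw [specNorm_eq, specNorm_eq, specNorm_eq]; exact Matrix.l2_opNorm_mul A B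

lemma specNorm_add_le (A B : Matrix (Fin m) (Fin n) ℝ) :
    specNorm (A + B) ≤ specNorm A + specNorm B := by
  rw [specNorm_eq, specNorm_eq, specNorm_eq]; exact norm_add_le A B

lemma specNorm_neg (A : Matrix (Fin m) (Fin n) ℝ) : specNorm (-A) = specNorm A := by
  rw [specNorm_eq, specNorm_eq]; exact norm_neg A

lemma specNorm_mul_transpose_self (A : Matrix (Fin m) (Fin n) ℝ) :
    specNorm (A * Aᵀ) = specNorm A * specNorm A := by
  have := Matrix.l2_opNorm_conjTranspose_mul_self Aᵀ
  rw [conjT, Matrix.transpose_transpose] at this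
  rw [specNorm_eq, specNorm_eq, this, ← specNorm_eq, ← specNorm_eq, specNorm_transpose]

lemma eucNorm_mulVec_le (A : Matrix (Fin m) (Fin n) ℝ) (v : Fin n → ℝ) :
    eucNorm (A.mulVec v) ≤ specNorm A * eucNorm v := by
  rw [specNorm_eq, Matrix.l2_opNorm_def, eucNorm_eq, eucNorm_eq]
  have h := ((Matrix.toEuclideanLin (𝕜 := ℝ) (m := Fin m) (n := Fin n)).trans
      LinearMap.toContinuousLinearMap A).le_opNorm ((WithLp.equiv 2 (Fin n → ℝ)).symm v)
  exact h

lemma specNorm_le_of_bound (A : Matrix (Fin m) (Fin n) ℝ) {c : ℝ} (hc : 0 ≤ c)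
    (h : ∀ v, eucNorm (A.mulVec v) ≤ c * eucNorm v) : specNorm A ≤ c := by
  rw [specNorm_eq, Matrix.l2_opNorm_def]
  refine ContinuousLinearMap.opNorm_le_bound _ hc fun x => ?_
  have := h (WithLp.equiv 2 (Fin n → ℝ) x)
  rw [eucNorm_eq, eucNorm_eq, Equiv.symm_apply_apply] at this
  exact this

lemma eucNorm_nonneg (v : Fin n → ℝ) : 0 ≤ eucNorm v := Real.sqrt_nonneg _

lemma eucNorm_sq (v : Fin n → ℝ) : eucNorm v ^ 2 = v ⬝ᵥ v := by
  rw [eucNorm, Real.sq_sqrt (Finset.sum_nonneg fun i _ => sq_nonneg _)]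
  simp [dotProduct, sq]

lemma eucNorm_eq_zero {v : Fin n → ℝ} (h : eucNorm v = 0) : v = 0 := by
  rw [eucNorm] at h
  have h0 : (0:ℝ) ≤ ∑ k, v k ^ 2 := Finset.sum_nonneg fun i _ => sq_nonneg _
  have h2 : ∑ k, v k ^ 2 = 0 := (Real.sqrt_eq_zero h0).mp h
  have := (Finset.sum_eq_zero_iff_of_nonneg (fun i _ => sq_nonneg (v i))).mp h2
  funext i
  have h3 : v i ^ 2 = 0 := this i (Finset.mem_univ i)
  simpa using (pow_eq_zero_iff two_ne_zero).mp h3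

lemma eucNorm_pos {v : Fin n → ℝ} (h : v ≠ 0) : 0 < eucNorm v :=
  lt_of_le_of_ne (eucNorm_nonneg v) fun h' => h (eucNorm_eq_zero h'.symm)

lemma dot_le_eucNorm (v w : Fin n → ℝ) : v ⬝ᵥ w ≤ eucNorm v * eucNorm w := by
  rcases le_or_gt (v ⬝ᵥ w) 0 with h | h
  · exact h.trans (mul_nonneg (eucNorm_nonneg v) (eucNorm_nonneg w))
  · have key := Finset.sum_mul_sq_le_sq_mul_sq Finset.univ v w
    rw [eucNorm, eucNorm, ← Real.sqrt_mul (Finset.sum_nonneg fun i _ => sq_nonneg _)]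
    rw [show v ⬝ᵥ w = ∑ i, v i * w i from rfl] at h ⊢
    have hprod : (0:ℝ) ≤ (∑ i, v i ^ 2) * ∑ i, w i ^ 2 :=
      mul_nonneg (Finset.sum_nonneg fun i _ => sq_nonneg _)
        (Finset.sum_nonneg fun i _ => sq_nonneg _)
    exact (Real.le_sqrt h.le hprod).mpr key

lemma neg_eucNorm_le_dot (v w : Fin n → ℝ) : -(eucNorm v * eucNorm w) ≤ v ⬝ᵥ w := by
  have h := dot_le_eucNorm v (-w)
  rw [dotProduct_neg] at h
  have hw : eucNorm (-w) = eucNorm w := by simp [eucNorm]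
  rw [hw] at h
  linarith

lemma eucNorm_zero : eucNorm (0 : Fin n → ℝ) = 0 := by simp [eucNorm]

lemma eucNorm_add_le (v w : Fin n → ℝ) : eucNorm (v + w) ≤ eucNorm v + eucNorm w := by
  have h1 : eucNorm (v + w) ^ 2 = v ⬝ᵥ v + 2 * (v ⬝ᵥ w) + w ⬝ᵥ w := by
    rw [eucNorm_sq, add_dotProduct, dotProduct_add, dotProduct_add, dotProduct_comm w v]; ring
  nlinarith [dot_le_eucNorm v w, eucNorm_nonneg v, eucNorm_nonneg w, eucNorm_nonneg (v + w),
    eucNorm_sq v, eucNorm_sq w]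

lemma eucNorm_smul (r : ℝ) (v : Fin n → ℝ) : eucNorm (r • v) = |r| * eucNorm v := by
  simp only [eucNorm, Pi.smul_apply, smul_eq_mul, mul_pow, ← Finset.mul_sum]
  rw [Real.sqrt_mul (sq_nonneg r), Real.sqrt_sq_eq_abs]

lemma inv_facts (A : Matrix (Fin n) (Fin n) ℝ) {c : ℝ} (hc : 0 < c)
    (h : ∀ v, c * eucNorm v ≤ eucNorm (A.mulVec v)) :
    A * A⁻¹ = 1 ∧ A⁻¹ * A = 1 ∧ specNorm A⁻¹ ≤ c⁻¹ := by
  have hdet : IsUnit A.det := by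
    rw [isUnit_iff_ne_zero]
    intro hd
    obtain ⟨v, hv, hAv⟩ := (Matrix.exists_mulVec_eq_zero_iff).mpr hd
    have := h v
    rw [hAv, eucNorm_zero] at this
    nlinarith [eucNorm_pos hv]
  refine ⟨Matrix.mul_nonsing_inv A hdet, Matrix.nonsing_inv_mul A hdet, ?_⟩
  refine specNorm_le_of_bound _ (inv_nonneg.mpr hc.le) fun w => ?_
  have h1 := h (A⁻¹.mulVec w)
  rw [Matrix.mulVec_mulVec, Matrix.mul_nonsing_inv A hdet, Matrix.one_mulVec] at h1
  rw [inv_mul_eq_div, le_div_iff₀ hc]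
  nlinarith [h1]

lemma dot_gram {J K : ℕ} (S : Matrix (Fin J) (Fin K) ℝ) (v : Fin J → ℝ) :
    (Sᵀ.mulVec v) ⬝ᵥ (Sᵀ.mulVec v) = v ⬝ᵥ ((S * Sᵀ).mulVec v) := by
  rw [Matrix.mulVec_transpose, ← Matrix.mulVec_mulVec, Matrix.mulVec_transpose,
    Matrix.dotProduct_mulVec]

lemma gram_lower {J K : ℕ} (S : Matrix (Fin J) (Fin K) ℝ) {c : ℝ} (hc : 0 ≤ c)
    (h : ∀ v, c * eucNorm v ≤ eucNorm (Sᵀ.mulVec v)) :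
    ∀ v, c * c * eucNorm v ≤ eucNorm ((S * Sᵀ).mulVec v) := by
  intro v
  rcases eq_or_ne v 0 with rfl | hv
  · simp [Matrix.mulVec_zero, eucNorm_zero]
  · have hvpos := eucNorm_pos hv
    have h1 := h v
    have h2 : eucNorm (Sᵀ.mulVec v) ^ 2 = v ⬝ᵥ ((S * Sᵀ).mulVec v) := by
      rw [eucNorm_sq, dot_gram]
    have h3 := dot_le_eucNorm v ((S * Sᵀ).mulVec v)
    have h4 : c * c * (eucNorm v * eucNorm v) ≤ eucNorm v * eucNorm ((S * Sᵀ).mulVec v) := by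
      nlinarith [mul_nonneg hc (eucNorm_nonneg v), eucNorm_nonneg (Sᵀ.mulVec v)]
    exact (mul_le_mul_iff_right₀ hvpos).mp (by nlinarith [h4])

lemma minSingVal_le {J K : ℕ} (S : Matrix (Fin J) (Fin K) ℝ) {v : Fin J → ℝ}
    (h : eucNorm v = 1) : minSingVal S ≤ eucNorm (Sᵀ.mulVec v) :=
  csInf_le ⟨0, fun r ⟨w, _, hr⟩ => hr ▸ eucNorm_nonneg _⟩ ⟨v, h, rfl⟩

lemma minSingVal_mulVec {J K : ℕ} (S : Matrix (Fin J) (Fin K) ℝ) (v : Fin J → ℝ) :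
    minSingVal S * eucNorm v ≤ eucNorm (Sᵀ.mulVec v) := by
  rcases eq_or_ne v 0 with rfl | hv
  · simp [Matrix.mulVec_zero, eucNorm_zero]
  · have hc := eucNorm_pos hv
    have hu : eucNorm ((eucNorm v)⁻¹ • v) = 1 := by
      rw [eucNorm_smul, abs_of_pos (inv_pos.mpr hc), inv_mul_cancel₀ hc.ne']
    have h1 := minSingVal_le S hu
    rw [Matrix.mulVec_smul, eucNorm_smul, abs_of_pos (inv_pos.mpr hc)] at h1
    calc minSingVal S * eucNorm v
        ≤ ((eucNorm v)⁻¹ * eucNorm (Sᵀ.mulVec v)) * eucNorm v :=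
          mul_le_mul_of_nonneg_right h1 hc.le
      _ = eucNorm (Sᵀ.mulVec v) := by field_simp

end Stmt13Aux

open Stmt13Aux

set_option maxHeartbeats 1000000 in
/-- there is a universal constant `C` bounding the spectral norm
of `(ŜA⁻¹Ŝ')⁻¹ŜA⁻¹ - (SS')⁻¹S`.  Here `Asq` is the positive-semidefinite
symmetric square root of `A` (so `A^{-1/2} = Asq⁻¹`). -/
theorem stmt13 :
    ∃ C : ℝ, 0 ≤ C ∧
      ∀ (J K : ℕ), 0 < J → J ≤ K →
        ∀ (S Shat : Matrix (Fin J) (Fin K) ℝ) (σ : ℝ)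
          (A Asq : Matrix (Fin K) (Fin K) ℝ),
          specNorm S ≤ 1 → σ = minSingVal S → 0 < σ →
          A.PosSemidef → specNorm (A - 1) ≤ 1 / 2 →
          Asq.PosSemidef → Asq * Asq = A →
          Real.sqrt 2 * specNorm (Shat - S)
              + (1 + (Real.sqrt 2)⁻¹)⁻¹ * specNorm (A - 1) ≤ σ / 2 →
          specNorm ((Shat * A⁻¹ * Shatᵀ)⁻¹ * Shat * A⁻¹ - (S * Sᵀ)⁻¹ * S)
            ≤ C * (σ⁻¹ * specNorm (A - 1)
                + (σ ^ 2)⁻¹ * (specNorm (Shat - S) + specNorm (A - 1))) := by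
  refine ⟨50000, by norm_num, ?_⟩
  intro J K hJ hJK S Shat σ A Asq hS1 hσdef hσpos hApsd hAhalf hAsqpsd hA2 h13
  set D := specNorm (Shat - S) with hD
  set E := specNorm (A - 1) with hE
  have hD0 : 0 ≤ D := specNorm_nonneg _
  have hE0 : 0 ≤ E := specNorm_nonneg _
  -- numeric facts about sqrt 2
  have h2l : (1.4142:ℝ) ≤ Real.sqrt 2 := by
    have h := Real.sq_sqrt (by norm_num : (0:ℝ) ≤ 2)
    nlinarith [Real.sqrt_nonneg 2]
  have hainv : (0.5857:ℝ) ≤ (1 + (Real.sqrt 2)⁻¹)⁻¹ := by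
    have h1 : (Real.sqrt 2)⁻¹ ≤ 0.7072 := by
      rw [inv_le_comm₀ (by linarith) (by norm_num)]
      have : (0.7072:ℝ)⁻¹ ≤ 1.4142 := by norm_num
      linarith
    have h2 : (0:ℝ) < 1 + (Real.sqrt 2)⁻¹ := by positivity
    rw [le_inv_comm₀ (by norm_num) h2]
    have : (1.7072:ℝ) ≤ (0.5857:ℝ)⁻¹ := by norm_num
    linarith
  -- the quantitative hypothesis in rational form
  have hyp : 1.4142 * D + 0.5857 * E ≤ σ / 2 := by
    nlinarith [mul_le_mul_of_nonneg_right h2l hD0, mul_le_mul_of_nonneg_right hainv hE0]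
  -- transposes and symmetry
  have hAsqT : Asqᵀ = Asq := by rw [← conjT]; exact hAsqpsd.1
  -- smallest singular value of S
  have hSlow : ∀ v, σ * eucNorm v ≤ eucNorm (Sᵀ.mulVec v) := by
    intro v; rw [hσdef]; exact minSingVal_mulVec S v
  have hNlow := gram_lower S hσpos.le hSlow
  have hN := inv_facts (S * Sᵀ) (by positivity : (0:ℝ) < σ * σ) hNlow
  -- bounds for (A - 1) acting on vectors
  have hE' : ∀ v, eucNorm ((A - 1).mulVec v) ≤ E * eucNorm v := fun v =>
    eucNorm_mulVec_le (A - 1) v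
  -- quadratic form of A
  have hAq : ∀ v, (1/2) * eucNorm v ^ 2 ≤ eucNorm (Asq.mulVec v) ^ 2 := by
    intro v
    have h1 : eucNorm (Asq.mulVec v) ^ 2 = v ⬝ᵥ (A.mulVec v) := by
      have := dot_gram Asq v
      rw [hAsqT] at this
      rw [eucNorm_sq, this, hA2]
    have h2 : v ⬝ᵥ (A.mulVec v) = v ⬝ᵥ v + v ⬝ᵥ ((A - 1).mulVec v) := by
      rw [Matrix.sub_mulVec, Matrix.one_mulVec, dotProduct_sub]; ring
    have h3 := neg_eucNorm_le_dot v ((A - 1).mulVec v)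
    have h4 := hE' v
    have h5 := eucNorm_nonneg v
    have h6 : E ≤ 1/2 := hAhalf
    nlinarith [eucNorm_sq v, eucNorm_nonneg ((A - 1).mulVec v)]
  have hAsqlow : ∀ v, (70/99 : ℝ) * eucNorm v ≤ eucNorm (Asq.mulVec v) := by
    intro v
    nlinarith [hAq v, eucNorm_nonneg v, eucNorm_nonneg (Asq.mulVec v)]
  have hAsqI := inv_facts Asq (by norm_num : (0:ℝ) < 70/99) hAsqlow
  have hAsqInvNorm : specNorm Asq⁻¹ ≤ 99/70 := by
    have := hAsqI.2.2; rwa [show ((70:ℝ)/99)⁻¹ = 99/70 by norm_num] at this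
  -- 1 + Asq
  have hOnelow : ∀ v, (11/9 : ℝ) * eucNorm v ≤ eucNorm ((1 + Asq).mulVec v) := by
    intro v
    have h1 : eucNorm ((1 + Asq).mulVec v) ^ 2
        = v ⬝ᵥ v + 2 * (v ⬝ᵥ Asq.mulVec v) + (Asq.mulVec v) ⬝ᵥ (Asq.mulVec v) := by
      rw [eucNorm_sq, Matrix.add_mulVec, Matrix.one_mulVec, dotProduct_add, add_dotProduct,
        add_dotProduct, dotProduct_comm (Asq.mulVec v) v]
      ring
    have h2 : 0 ≤ v ⬝ᵥ Asq.mulVec v := by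
      have := hAsqpsd.dotProduct_mulVec_nonneg v
      simpa using this
    nlinarith [hAq v, eucNorm_sq v, eucNorm_nonneg v, eucNorm_nonneg ((1 + Asq).mulVec v),
      eucNorm_nonneg (Asq.mulVec v), eucNorm_sq (Asq.mulVec v)]
  have hOne := inv_facts (1 + Asq) (by norm_num : (0:ℝ) < 11/9) hOnelow
  have hOneNorm : specNorm (1 + Asq)⁻¹ ≤ 9/11 := by
    have := hOne.2.2; rwa [show ((11:ℝ)/9)⁻¹ = 9/11 by norm_num] at this
  -- ‖Asq⁻¹ - 1‖ ≤ (81/70) E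
  have hImId : Asq⁻¹ - 1 = Asq⁻¹ * (1 - A) * (1 + Asq)⁻¹ := by
    have e : (1 - Asq) * (1 + Asq) = 1 - A := by rw [← hA2]; noncomm_ring
    calc Asq⁻¹ - 1 = Asq⁻¹ * (1 - Asq) := by
          rw [Matrix.mul_sub, Matrix.mul_one, hAsqI.2.1]
      _ = Asq⁻¹ * ((1 - Asq) * ((1 + Asq) * (1 + Asq)⁻¹)) := by
          rw [hOne.1, Matrix.mul_one]
      _ = Asq⁻¹ * (1 - A) * (1 + Asq)⁻¹ := by
          rw [← e]; simp only [Matrix.mul_assoc]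
  have hImNorm : specNorm (Asq⁻¹ - 1) ≤ (81/70) * E := by
    have h1 : specNorm (1 - A) = E := by
      rw [hE, ← specNorm_neg (A - 1), neg_sub]
    calc specNorm (Asq⁻¹ - 1) = specNorm (Asq⁻¹ * (1 - A) * (1 + Asq)⁻¹) := by rw [hImId]
      _ ≤ specNorm (Asq⁻¹ * (1 - A)) * specNorm (1 + Asq)⁻¹ := specNorm_mul_le _ _
      _ ≤ (specNorm Asq⁻¹ * specNorm (1 - A)) * specNorm (1 + Asq)⁻¹ := by
          apply mul_le_mul_of_nonneg_right (specNorm_mul_le _ _) (specNorm_nonneg _)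
      _ ≤ ((99/70) * E) * (9/11) := by
          apply mul_le_mul
          · rw [h1]
            exact mul_le_mul_of_nonneg_right hAsqInvNorm hE0
          · exact hOneNorm
          · exact specNorm_nonneg _
          · positivity
      _ = (81/70) * E := by ring
  -- B := Shat * Asq⁻¹, kept opaque
  obtain ⟨B, hB⟩ : ∃ B, B = Shat * Asq⁻¹ := ⟨_, rfl⟩
  have hBS : specNorm (B - S) ≤ (99/70) * D + (81/70) * E := by
    have hid : B - S = (Shat - S) * Asq⁻¹ + S * (Asq⁻¹ - 1) := by
      rw [hB]
      simp only [Matrix.sub_mul, Matrix.mul_sub, Matrix.mul_one]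
      abel
    calc specNorm (B - S) ≤ specNorm ((Shat - S) * Asq⁻¹) + specNorm (S * (Asq⁻¹ - 1)) := by
          rw [hid]; exact specNorm_add_le _ _
      _ ≤ specNorm (Shat - S) * specNorm Asq⁻¹ + specNorm S * specNorm (Asq⁻¹ - 1) :=
          add_le_add (specNorm_mul_le _ _) (specNorm_mul_le _ _)
      _ ≤ D * (99/70) + 1 * ((81/70) * E) := by
          apply add_le_add
          · exact mul_le_mul_of_nonneg_left hAsqInvNorm hD0
          · exact mul_le_mul hS1 hImNorm (specNorm_nonneg _) (by norm_num)
      _ = (99/70) * D + (81/70) * E := by ring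
  set Δ := specNorm (B - S) with hΔdef
  have hΔ0 : 0 ≤ Δ := specNorm_nonneg _
  have hΔσ : Δ ≤ 0.99 * σ := by
    have := hBS; linarith
  -- lower bound for Bᵀ
  have hBlow : ∀ v, (σ/100) * eucNorm v ≤ eucNorm (Bᵀ.mulVec v) := by
    intro v
    have hid : Sᵀ.mulVec v = Bᵀ.mulVec v + ((S - B)ᵀ).mulVec v := by
      have h0 : B + (S - B) = S := by abel
      rw [← Matrix.add_mulVec, ← Matrix.transpose_add, h0]
    have h1 : eucNorm (Sᵀ.mulVec v) ≤ eucNorm (Bᵀ.mulVec v) + eucNorm (((S - B)ᵀ).mulVec v) := by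
      rw [hid]; exact eucNorm_add_le _ _
    have h2 : eucNorm (((S - B)ᵀ).mulVec v) ≤ Δ * eucNorm v := by
      have h3 := eucNorm_mulVec_le ((S - B)ᵀ) v
      have h4 : specNorm ((S - B)ᵀ) = Δ := by
        rw [specNorm_transpose, hΔdef, ← specNorm_neg (S - B), neg_sub]
      rwa [h4] at h3
    have h5 := hSlow v
    have h6 := eucNorm_nonneg v
    have h7 : Δ * eucNorm v ≤ 0.99 * σ * eucNorm v := by
      apply mul_le_mul_of_nonneg_right _ h6
      linarith
    linarith
  have hMlow := gram_lower B (by positivity : (0:ℝ) ≤ σ/100) hBlow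
  have hM := inv_facts (B * Bᵀ) (by positivity : (0:ℝ) < (σ/100) * (σ/100)) hMlow
  have hMinv : specNorm (B * Bᵀ)⁻¹ ≤ 10000 * (σ⁻¹ * σ⁻¹) := by
    have := hM.2.2
    rwa [show ((σ/100) * (σ/100))⁻¹ = 10000 * (σ⁻¹ * σ⁻¹) by
      field_simp; ring] at this
  have hNinv : specNorm (S * Sᵀ)⁻¹ ≤ σ⁻¹ * σ⁻¹ := by
    have := hN.2.2
    rwa [show ((σ * σ):ℝ)⁻¹ = σ⁻¹ * σ⁻¹ by rw [mul_inv]] at this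
  -- symmetry of inverses
  have hNsymInv : ((S * Sᵀ)⁻¹)ᵀ = (S * Sᵀ)⁻¹ := by
    rw [Matrix.transpose_nonsing_inv, Matrix.transpose_mul, Matrix.transpose_transpose]
  have hMsymInv : ((B * Bᵀ)⁻¹)ᵀ = (B * Bᵀ)⁻¹ := by
    rw [Matrix.transpose_nonsing_inv, Matrix.transpose_mul, Matrix.transpose_transpose]
  -- cancellation lemmas
  have hc1 : ∀ (p : ℕ) (X : Matrix (Fin J) (Fin p) ℝ),
      S * (Sᵀ * ((S * Sᵀ)⁻¹ * X)) = X := by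
    intro p X
    rw [← Matrix.mul_assoc, ← Matrix.mul_assoc, Matrix.mul_assoc S Sᵀ, ← Matrix.mul_assoc S Sᵀ,
      hN.1, Matrix.one_mul]
  have hc2 : ∀ (p : ℕ) (X : Matrix (Fin J) (Fin p) ℝ),
      (S * Sᵀ)⁻¹ * (S * (Sᵀ * X)) = X := by
    intro p X
    rw [← Matrix.mul_assoc, ← Matrix.mul_assoc, Matrix.mul_assoc (S * Sᵀ)⁻¹ S Sᵀ,
      hN.2.1, Matrix.one_mul]
  have hc4 : ∀ (p : ℕ) (X : Matrix (Fin J) (Fin p) ℝ),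
      (B * Bᵀ)⁻¹ * (B * (Bᵀ * X)) = X := by
    intro p X
    rw [← Matrix.mul_assoc, ← Matrix.mul_assoc, Matrix.mul_assoc (B * Bᵀ)⁻¹ B Bᵀ,
      hM.2.1, Matrix.one_mul]
  -- norm of P
  have hPP : ((S * Sᵀ)⁻¹ * S) * ((S * Sᵀ)⁻¹ * S)ᵀ = (S * Sᵀ)⁻¹ := by
    rw [Matrix.transpose_mul, hNsymInv]
    simp only [Matrix.mul_assoc]
    rw [hc2]
  have hPnorm : specNorm ((S * Sᵀ)⁻¹ * S) ≤ σ⁻¹ := by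
    have h1 := specNorm_mul_transpose_self ((S * Sᵀ)⁻¹ * S)
    rw [hPP] at h1
    nlinarith [specNorm_nonneg ((S * Sᵀ)⁻¹ * S), hNinv, inv_pos.mpr hσpos]
  -- norm of T
  have hTT : ((B * Bᵀ)⁻¹ * B) * ((B * Bᵀ)⁻¹ * B)ᵀ = (B * Bᵀ)⁻¹ := by
    rw [Matrix.transpose_mul, hMsymInv]
    simp only [Matrix.mul_assoc]
    rw [hc4]
  have hTnorm : specNorm ((B * Bᵀ)⁻¹ * B) ≤ 100 * σ⁻¹ := by
    have h1 := specNorm_mul_transpose_self ((B * Bᵀ)⁻¹ * B)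
    rw [hTT] at h1
    nlinarith [specNorm_nonneg ((B * Bᵀ)⁻¹ * B), hMinv, inv_pos.mpr hσpos]
  -- norm of Q
  have hQsym : (Sᵀ * ((S * Sᵀ)⁻¹ * S))ᵀ = Sᵀ * ((S * Sᵀ)⁻¹ * S) := by
    rw [Matrix.transpose_mul, Matrix.transpose_mul, hNsymInv, Matrix.transpose_transpose,
      Matrix.mul_assoc]
  have hQQ : (Sᵀ * ((S * Sᵀ)⁻¹ * S)) * (Sᵀ * ((S * Sᵀ)⁻¹ * S))
      = Sᵀ * ((S * Sᵀ)⁻¹ * S) := by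
    simp only [Matrix.mul_assoc]
    rw [hc1]
  have hQnorm : specNorm (Sᵀ * ((S * Sᵀ)⁻¹ * S)) ≤ 1 := by
    have h1 := specNorm_mul_transpose_self (Sᵀ * ((S * Sᵀ)⁻¹ * S))
    rw [hQsym, hQQ] at h1
    nlinarith [specNorm_nonneg (Sᵀ * ((S * Sᵀ)⁻¹ * S))]
  -- rewrite of the goal matrix
  have hAinv : A⁻¹ = Asq⁻¹ * Asq⁻¹ := by rw [← hA2, Matrix.mul_inv_rev]
  have hBt : Bᵀ = Asq⁻¹ * Shatᵀ := by
    rw [hB, Matrix.transpose_mul, Matrix.transpose_nonsing_inv, hAsqT]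
  have hSA : Shat * A⁻¹ * Shatᵀ = B * Bᵀ := by
    rw [hAinv, hBt, hB]
    simp only [Matrix.mul_assoc]
  have hBA : Shat * A⁻¹ = B * Asq⁻¹ := by
    rw [hAinv, hB, Matrix.mul_assoc]
  have hKey : (B * Bᵀ)⁻¹ * B - (S * Sᵀ)⁻¹ * S
      = (B * Bᵀ)⁻¹ * (B - S)
        + (B * Bᵀ)⁻¹ * ((S - B) * (Sᵀ * ((S * Sᵀ)⁻¹ * S)))
        + ((B * Bᵀ)⁻¹ * B) * ((S - B)ᵀ * ((S * Sᵀ)⁻¹ * S)) := by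
    rw [Matrix.transpose_sub]
    simp only [Matrix.mul_sub, Matrix.sub_mul, Matrix.mul_add, Matrix.add_mul,
      Matrix.mul_assoc, hc1, hc2, hc4]
    abel
  have hgoal : (Shat * A⁻¹ * Shatᵀ)⁻¹ * Shat * A⁻¹ - (S * Sᵀ)⁻¹ * S
      = ((B * Bᵀ)⁻¹ * (B - S)
          + (B * Bᵀ)⁻¹ * ((S - B) * (Sᵀ * ((S * Sᵀ)⁻¹ * S)))
          + ((B * Bᵀ)⁻¹ * B) * ((S - B)ᵀ * ((S * Sᵀ)⁻¹ * S))) * Asq⁻¹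
        + ((S * Sᵀ)⁻¹ * S) * (Asq⁻¹ - 1) := by
    rw [← hKey, Matrix.sub_mul, Matrix.mul_sub, Matrix.mul_one, Matrix.mul_assoc, hSA, hBA,
      ← Matrix.mul_assoc]
    abel
  rw [hgoal]
  -- now the norm estimates
  set u := σ⁻¹ with hu
  have hu0 : 0 < u := inv_pos.mpr hσpos
  have hSBnorm : specNorm (S - B) = Δ := by
    rw [hΔdef, ← specNorm_neg (S - B), neg_sub]
  have hSBtnorm : specNorm ((S - B)ᵀ) = Δ := by rw [specNorm_transpose, hSBnorm]
  have hb1 : specNorm ((B * Bᵀ)⁻¹ * (B - S)) ≤ 10000 * (u * u) * Δ := by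
    calc specNorm ((B * Bᵀ)⁻¹ * (B - S)) ≤ specNorm (B * Bᵀ)⁻¹ * specNorm (B - S) :=
          specNorm_mul_le _ _
      _ ≤ 10000 * (u * u) * Δ :=
          mul_le_mul hMinv le_rfl hΔ0 (by positivity)
  have hb2 : specNorm ((B * Bᵀ)⁻¹ * ((S - B) * (Sᵀ * ((S * Sᵀ)⁻¹ * S))))
      ≤ 10000 * (u * u) * Δ := by
    calc specNorm ((B * Bᵀ)⁻¹ * ((S - B) * (Sᵀ * ((S * Sᵀ)⁻¹ * S))))
        ≤ specNorm (B * Bᵀ)⁻¹ * specNorm ((S - B) * (Sᵀ * ((S * Sᵀ)⁻¹ * S))) :=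
          specNorm_mul_le _ _
      _ ≤ (10000 * (u * u)) * (Δ * 1) := by
          apply mul_le_mul hMinv _ (specNorm_nonneg _) (by positivity)
          calc specNorm ((S - B) * (Sᵀ * ((S * Sᵀ)⁻¹ * S)))
              ≤ specNorm (S - B) * specNorm (Sᵀ * ((S * Sᵀ)⁻¹ * S)) := specNorm_mul_le _ _
            _ ≤ Δ * 1 := by
                rw [hSBnorm]
                exact mul_le_mul_of_nonneg_left hQnorm hΔ0
      _ = 10000 * (u * u) * Δ := by ring
  have hb3 : specNorm (((B * Bᵀ)⁻¹ * B) * ((S - B)ᵀ * ((S * Sᵀ)⁻¹ * S)))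
      ≤ 100 * (u * u) * Δ := by
    calc specNorm (((B * Bᵀ)⁻¹ * B) * ((S - B)ᵀ * ((S * Sᵀ)⁻¹ * S)))
        ≤ specNorm ((B * Bᵀ)⁻¹ * B) * specNorm ((S - B)ᵀ * ((S * Sᵀ)⁻¹ * S)) :=
          specNorm_mul_le _ _
      _ ≤ (100 * u) * (Δ * u) := by
          apply mul_le_mul hTnorm _ (specNorm_nonneg _) (by positivity)
          calc specNorm ((S - B)ᵀ * ((S * Sᵀ)⁻¹ * S))
              ≤ specNorm ((S - B)ᵀ) * specNorm ((S * Sᵀ)⁻¹ * S) := specNorm_mul_le _ _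
            _ ≤ Δ * u := by
                rw [hSBtnorm]
                exact mul_le_mul_of_nonneg_left hPnorm hΔ0
      _ = 100 * (u * u) * Δ := by ring
  have hsum : specNorm ((B * Bᵀ)⁻¹ * (B - S)
      + (B * Bᵀ)⁻¹ * ((S - B) * (Sᵀ * ((S * Sᵀ)⁻¹ * S)))
      + ((B * Bᵀ)⁻¹ * B) * ((S - B)ᵀ * ((S * Sᵀ)⁻¹ * S)))
      ≤ 20100 * (u * u) * Δ := by
    calc specNorm _ ≤ specNorm ((B * Bᵀ)⁻¹ * (B - S)
          + (B * Bᵀ)⁻¹ * ((S - B) * (Sᵀ * ((S * Sᵀ)⁻¹ * S))))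
          + specNorm (((B * Bᵀ)⁻¹ * B) * ((S - B)ᵀ * ((S * Sᵀ)⁻¹ * S))) := specNorm_add_le _ _
      _ ≤ (specNorm ((B * Bᵀ)⁻¹ * (B - S))
          + specNorm ((B * Bᵀ)⁻¹ * ((S - B) * (Sᵀ * ((S * Sᵀ)⁻¹ * S)))))
          + specNorm (((B * Bᵀ)⁻¹ * B) * ((S - B)ᵀ * ((S * Sᵀ)⁻¹ * S))) :=
          add_le_add_left (specNorm_add_le _ _) _
      _ ≤ 20100 * (u * u) * Δ := by linarith
  have hfin1 : specNorm ((((B * Bᵀ)⁻¹ * (B - S)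
      + (B * Bᵀ)⁻¹ * ((S - B) * (Sᵀ * ((S * Sᵀ)⁻¹ * S)))
      + ((B * Bᵀ)⁻¹ * B) * ((S - B)ᵀ * ((S * Sᵀ)⁻¹ * S)))) * Asq⁻¹)
      ≤ (20100 * (u * u) * Δ) * (99/70) := by
    calc specNorm _ ≤ specNorm ((B * Bᵀ)⁻¹ * (B - S)
          + (B * Bᵀ)⁻¹ * ((S - B) * (Sᵀ * ((S * Sᵀ)⁻¹ * S)))
          + ((B * Bᵀ)⁻¹ * B) * ((S - B)ᵀ * ((S * Sᵀ)⁻¹ * S))) * specNorm Asq⁻¹ :=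
          specNorm_mul_le _ _
      _ ≤ (20100 * (u * u) * Δ) * (99/70) :=
          mul_le_mul hsum hAsqInvNorm (specNorm_nonneg _) (by positivity)
  have hfin2 : specNorm (((S * Sᵀ)⁻¹ * S) * (Asq⁻¹ - 1)) ≤ u * ((81/70) * E) := by
    calc specNorm (((S * Sᵀ)⁻¹ * S) * (Asq⁻¹ - 1))
        ≤ specNorm ((S * Sᵀ)⁻¹ * S) * specNorm (Asq⁻¹ - 1) := specNorm_mul_le _ _
      _ ≤ u * ((81/70) * E) :=
          mul_le_mul hPnorm hImNorm (specNorm_nonneg _) hu0.le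
  have htot := specNorm_add_le ((((B * Bᵀ)⁻¹ * (B - S)
      + (B * Bᵀ)⁻¹ * ((S - B) * (Sᵀ * ((S * Sᵀ)⁻¹ * S)))
      + ((B * Bᵀ)⁻¹ * B) * ((S - B)ᵀ * ((S * Sᵀ)⁻¹ * S)))) * Asq⁻¹)
      (((S * Sᵀ)⁻¹ * S) * (Asq⁻¹ - 1))
  have hsq : ((σ:ℝ) ^ 2)⁻¹ = u * u := by rw [sq, mul_inv]
  rw [hsq]
  have hΔD : Δ ≤ (99/70) * D + (81/70) * E := hBS
  have huu0 : (0:ℝ) ≤ u * u := by positivity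
  have hmul := mul_le_mul_of_nonneg_left hΔD (by positivity : (0:ℝ) ≤ 20100 * (99/70) * (u * u))
  linarith [htot, hfin1, hfin2, hmul, mul_nonneg hu0.le hE0,
    mul_nonneg huu0 hD0, mul_nonneg huu0 hE0]
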